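/- Let L > 0 and let v : ℝ → ℝ be continuously differentiable with v(0) = 0 and v(x) > 0 for all x ∈ (0, L]. Then there exists a continuously differentiable function s : (−∞, 0] → ℝ such that s(0) = L, s'(t) = v(s(t)) for all t ≤ 0, and s(t) ∈ (0, L] for all t ≤ 0. -/

import Mathlib

open Set Real MeasureTheory intervalIntegral Filter


/-- for `L > 0` and a `C¹` velocity field `v` with `v(0) = 0` and `v > 0` on
`(0, L]`, the backward characteristic `s` with `s(0) = L`, `s'(t) = v(s(t))`, exists on all
of `(−∞, 0]` and stays in `(0, L]`. (It is continuously differentiable there since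
`s' = v ∘ s` is continuous.) -/
theorem stmt_15 (L : ℝ) (hL : 0 < L) (v : ℝ → ℝ) (hv : ContDiff ℝ 1 v)
    (hv0 : v 0 = 0) (hvpos : ∀ x ∈ Set.Ioc 0 L, 0 < v x) :
    ∃ s : ℝ → ℝ, s 0 = L ∧ (∀ t ≤ (0 : ℝ), HasDerivAt s (v (s t)) t) ∧
      ∀ t ≤ (0 : ℝ), s t ∈ Set.Ioc 0 L := by
  classical
  have hvc : Continuous v := hv.continuous
  -- extend positivity beyond L
  have hvL : 0 < v L := hvpos L ⟨hL, le_refl L⟩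
  obtain ⟨δ, hδ, hδv⟩ : ∃ δ > 0, ∀ y, |y - L| < δ → 0 < v y := by
    have hca : ContinuousAt v L := hvc.continuousAt
    obtain ⟨δ, hδ, h⟩ := Metric.continuousAt_iff.mp hca (v L) hvL
    refine ⟨δ, hδ, fun y hy => ?_⟩
    have := h (show dist y L < δ by simpa [Real.dist_eq] using hy)
    have : |v y - v L| < v L := by simpa [Real.dist_eq] using this
    have := abs_lt.mp this
    linarith [this.1]
  set M : ℝ := L + δ / 2 with hM
  have hLM : L < M := by simp [hM]; linarith
  have hM0 : 0 < M := lt_trans hL hLM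
  have hMv : ∀ x ∈ Ioo (0 : ℝ) M, 0 < v x := by
    intro x hx
    rcases le_or_gt x L with h | h
    · exact hvpos x ⟨hx.1, h⟩
    · apply hδv
      rw [abs_lt]
      have h2 := hx.2
      simp only [hM] at h2
      constructor
      · linarith
      · linarith
  have hIoo : L ∈ Ioo (0 : ℝ) M := ⟨hL, hLM⟩
  clear_value M
  -- the time function T
  set T : ℝ → ℝ := fun x => ∫ u in L..x, (v u)⁻¹ with hT
  have hvinvc : ∀ x ∈ Ioo (0 : ℝ) M, ContinuousAt (fun u => (v u)⁻¹) x := by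
    intro x hx
    exact hvc.continuousAt.inv₀ (ne_of_gt (hMv x hx))
  have hint : ∀ x ∈ Ioo (0 : ℝ) M, ∀ y ∈ Ioo (0 : ℝ) M,
      IntervalIntegrable (fun u => (v u)⁻¹) volume x y := by
    intro x hx y hy
    apply ContinuousOn.intervalIntegrable
    intro u hu
    have hu' : u ∈ Ioo (0 : ℝ) M := Set.ordConnected_Ioo.uIcc_subset hx hy hu
    exact (hvinvc u hu').continuousWithinAt
  have hTd : ∀ x ∈ Ioo (0 : ℝ) M, HasDerivAt T (v x)⁻¹ x := by
    intro x hx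
    exact integral_hasDerivAt_right (hint L hIoo x hx)
      (ContinuousAt.stronglyMeasurableAtFilter isOpen_Ioo hvinvc x hx)
      (hvinvc x hx)
  have hTc : ContinuousOn T (Ioo 0 M) := fun x hx => (hTd x hx).continuousAt.continuousWithinAt
  have hTmono : StrictMonoOn T (Ioo 0 M) := by
    apply strictMonoOn_of_deriv_pos (convex_Ioo 0 M) hTc
    intro x hx
    rw [isOpen_Ioo.interior_eq] at hx
    rw [(hTd x hx).deriv]
    exact inv_pos.mpr (hMv x hx)
  have hTL : T L = 0 := by simp [hT]
  -- Lipschitz-type bound on [0, L]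
  obtain ⟨C, hC⟩ : ∃ C : ℝ, ∀ x ∈ Icc (0 : ℝ) L, ‖deriv v x‖ ≤ C :=
    isCompact_Icc.exists_bound_of_continuousOn (hv.continuous_deriv le_rfl).continuousOn
  have hC0 : (0 : ℝ) < max C 1 := lt_of_lt_of_le zero_lt_one (le_max_right _ _)
  have hbound : ∀ x ∈ Icc (0 : ℝ) L, v x ≤ max C 1 * x := by
    intro x hx
    have := norm_image_sub_le_of_norm_deriv_le_segment'
      (f := v) (f' := deriv v) (a := (0:ℝ)) (b := L) (C := max C 1)
      (fun y hy => (hv.differentiable one_ne_zero y).hasDerivAt.hasDerivWithinAt)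
      (fun y hy => le_trans (hC y (Ico_subset_Icc_self hy)) (le_max_left C 1)) x hx
    rw [hv0, sub_zero, Real.norm_eq_abs] at this
    calc v x ≤ |v x| := le_abs_self _
    _ ≤ max C 1 * (x - 0) := this
    _ = max C 1 * x := by ring
  -- divergence: T escapes to -∞
  have hdiv : ∀ t : ℝ, ∃ x ∈ Ioo (0 : ℝ) L, T x < t := by
    intro t
    set K := max C 1
    set x : ℝ := L * Real.exp (-(K * (|t| + 1))) with hx
    have hxpos : 0 < x := mul_pos hL (Real.exp_pos _)
    have hxL : x < L := by
      have : Real.exp (-(K * (|t| + 1))) < 1 := by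
        rw [Real.exp_lt_one_iff]
        have : 0 < K * (|t| + 1) := mul_pos hC0 (by positivity)
        linarith
      calc x < L * 1 := by exact (mul_lt_mul_iff_right₀ hL).mpr this
      _ = L := mul_one L
    refine ⟨x, ⟨hxpos, hxL⟩, ?_⟩
    have hxM : x ∈ Ioo (0:ℝ) M := ⟨hxpos, lt_trans hxL hLM⟩
    -- T x = -∫ x..L v⁻¹ ≤ -∫ x..L (K u)⁻¹
    have hTx : T x = -∫ u in x..L, (v u)⁻¹ := by
      rw [hT]; simp [intervalIntegral.integral_symm x L]
    have hint2 : IntervalIntegrable (fun u => (K * u)⁻¹) volume x L := by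
      apply ContinuousOn.intervalIntegrable
      intro u hu
      rw [uIcc_of_le hxL.le] at hu
      have : 0 < u := lt_of_lt_of_le hxpos hu.1
      exact ((continuous_const.mul continuous_id).continuousWithinAt).inv₀
        (mul_pos hC0 this).ne'
    have hmono : ∫ u in x..L, (K * u)⁻¹ ≤ ∫ u in x..L, (v u)⁻¹ := by
      apply intervalIntegral.integral_mono_on hxL.le hint2 (hint x hxM L hIoo)
      intro u hu
      have hu0 : 0 < u := lt_of_lt_of_le hxpos hu.1
      have hvu : 0 < v u := hvpos u ⟨hu0, hu.2⟩
      have : v u ≤ K * u := hbound u ⟨hu0.le, hu.2⟩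
      exact inv_anti₀ hvu this
    have hcalc : ∫ u in x..L, (K * u)⁻¹ = K⁻¹ * Real.log (L / x) := by
      have : ∀ u, (K * u)⁻¹ = K⁻¹ * u⁻¹ := fun u => by rw [mul_inv]
      simp_rw [this]
      rw [intervalIntegral.integral_const_mul, integral_inv]
      rw [uIcc_of_le hxL.le]
      intro h
      exact absurd rfl (ne_of_gt (lt_of_lt_of_le hxpos h.1)).symm
    have hlog : Real.log (L / x) = K * (|t| + 1) := by
      rw [hx]
      rw [show L / (L * Real.exp (-(K * (|t| + 1)))) = (Real.exp (-(K * (|t| + 1))))⁻¹ by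
        field_simp]
      rw [← Real.exp_neg, Real.log_exp, neg_neg]
    have : T x ≤ -(K⁻¹ * (K * (|t| + 1))) := by
      rw [hTx, neg_le_neg_iff]
      calc K⁻¹ * (K * (|t| + 1)) = K⁻¹ * Real.log (L / x) := by rw [hlog]
      _ = ∫ u in x..L, (K * u)⁻¹ := hcalc.symm
      _ ≤ _ := hmono
    have hKK : K⁻¹ * (K * (|t| + 1)) = |t| + 1 := by
      field_simp
    rw [hKK] at this
    have := lt_of_le_of_lt this (by nlinarith [abs_nonneg t, neg_abs_le t] : -(|t| + 1) < t)
    exact this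
  clear_value T
  -- upper anchor
  set m : ℝ := (L + M) / 2 with hm
  have hmIoo : m ∈ Ioo (0 : ℝ) M := ⟨by positivity, by simp [hm]; linarith⟩
  have hLm : L < m := by simp [hm]; linarith
  clear_value m
  set ε : ℝ := T m with hε
  have hε0 : 0 < ε := by
    rw [hε, ← hTL]
    exact hTmono hIoo hmIoo hLm
  clear_value ε
  -- existence of inverse values
  have hex : ∀ t : ℝ, t < ε → ∃ x, x ∈ Ioo (0 : ℝ) M ∧ T x = t := by
    intro t ht
    obtain ⟨x₀, hx₀, hTx₀⟩ := hdiv t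
    have hx₀m : x₀ ≤ m := le_trans hx₀.2.le hLm.le
    have hsub : Icc x₀ m ⊆ Ioo (0 : ℝ) M := fun y hy =>
      ⟨lt_of_lt_of_le hx₀.1 hy.1, lt_of_le_of_lt hy.2 hmIoo.2⟩
    have hIVT := intermediate_value_Icc hx₀m (hTc.mono hsub)
    have : t ∈ Icc (T x₀) (T m) := ⟨hTx₀.le, by rw [← hε]; exact ht.le⟩
    obtain ⟨x, hxmem, hxeq⟩ := hIVT this
    exact ⟨x, hsub hxmem, hxeq⟩
  set s : ℝ → ℝ := fun t => if h : t < ε then (hex t h).choose else L with hs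
  have hsspec : ∀ t (h : t < ε), s t ∈ Ioo (0 : ℝ) M ∧ T (s t) = t := by
    intro t h
    simp only [hs, dif_pos h]
    exact (hex t h).choose_spec
  clear_value s
  have hTinj := hTmono.injOn
  have hs0 : s 0 = L := by
    have h := hsspec 0 hε0
    apply hTinj h.1 hIoo
    rw [h.2, hTL]
  -- s maps nonpositive times into (0, L]
  have hsIoc : ∀ t ≤ (0 : ℝ), s t ∈ Ioc 0 L := by
    intro t ht
    have h := hsspec t (lt_of_le_of_lt ht hε0)
    refine ⟨h.1.1, ?_⟩
    by_contra hc
    push_neg at hc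
    have := hTmono hIoo h.1 hc
    rw [h.2, hTL] at this
    linarith
  -- continuity of s on Iio ε
  have hscont : ∀ t < ε, ContinuousAt s t := by
    intro t ht
    rw [Metric.continuousAt_iff]
    intro r hr
    have hspec := hsspec t ht
    obtain ⟨x, hxdef⟩ : ∃ x, x = s t := ⟨s t, rfl⟩
    rw [← hxdef] at hspec
    have hxI : x ∈ Ioo (0:ℝ) M := hspec.1
    have hx1 : 0 < x := hxI.1
    have hx2 : x < M := hxI.2
    have ⟨a, ha⟩ : ∃ a, a = max (x - r) (x / 2) := ⟨_, rfl⟩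
    have ⟨b, hb⟩ : ∃ b, b = min (x + r) ((x + M) / 2) := ⟨_, rfl⟩
    have haI : a ∈ Ioo (0:ℝ) M := by
      constructor
      · rw [ha]; exact lt_of_lt_of_le (by linarith : (0:ℝ) < x / 2) (le_max_right _ _)
      · rw [ha]; exact max_lt (by linarith) (by linarith)
    have hbI : b ∈ Ioo (0:ℝ) M := by
      constructor
      · rw [hb]; exact lt_of_lt_of_le hx1 (le_min (by linarith) (by linarith))
      · rw [hb]; exact lt_of_le_of_lt (min_le_right _ _) (by linarith)
    have hax : a < x := by rw [ha]; exact max_lt (by linarith) (by linarith)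
    have hxb : x < b := by rw [hb]; exact lt_min (by linarith) (by linarith)
    have hTa : T a < t := by rw [← hspec.2]; exact hTmono haI hxI hax
    have hTb : t < T b := by rw [← hspec.2]; exact hTmono hxI hbI hxb
    refine ⟨min (min (t - T a) (T b - t)) (ε - t),
      lt_min (lt_min (by linarith) (by linarith)) (by linarith), ?_⟩
    intro y hy
    rw [Real.dist_eq] at hy
    have hy1 : |y - t| < t - T a := lt_of_lt_of_le hy (le_trans (min_le_left _ _) (min_le_left _ _))
    have hy2 : |y - t| < T b - t := lt_of_lt_of_le hy (le_trans (min_le_left _ _) (min_le_right _ _))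
    have hy3 : |y - t| < ε - t := lt_of_lt_of_le hy (min_le_right _ _)
    have hyε : y < ε := by
      have := (abs_lt.mp hy3).2; linarith
    have hyspec := hsspec y hyε
    have hya : T a < y := by have := (abs_lt.mp hy1).1; linarith
    have hyb : y < T b := by have := (abs_lt.mp hy2).2; linarith
    -- hence a < s y < b
    have h1 : a < s y := by
      by_contra hc
      push_neg at hc
      rcases eq_or_lt_of_le hc with h | h
      · rw [← h, hyspec.2] at hya; exact lt_irrefl _ hya
      · have := hTmono hyspec.1 haI h
        rw [hyspec.2] at this
        linarith
    have h2 : s y < b := by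
      by_contra hc
      push_neg at hc
      rcases eq_or_lt_of_le hc with h | h
      · rw [h, hyspec.2] at hyb; exact lt_irrefl _ hyb
      · have := hTmono hbI hyspec.1 h
        rw [hyspec.2] at this
        linarith
    rw [Real.dist_eq, abs_lt]
    constructor
    · have : x - r ≤ a := ha ▸ le_max_left _ _
      linarith
    · have : b ≤ x + r := hb ▸ min_le_left _ _
      linarith
  -- derivative of s
  have hsderiv : ∀ t ≤ (0 : ℝ), HasDerivAt s (v (s t)) t := by
    intro t ht
    have htε : t < ε := lt_of_le_of_lt ht hε0
    have hspec := hsspec t htε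
    have hvst : 0 < v (s t) := hMv _ hspec.1
    have hder : HasDerivAt T (v (s t))⁻¹ (s t) := hTd _ hspec.1
    have heq : ∀ᶠ y in nhds t, T (s y) = y := by
      have : Iio ε ∈ nhds t := Iio_mem_nhds htε
      filter_upwards [this] with y hy
      exact (hsspec y hy).2
    have := hder.of_local_left_inverse (hscont t htε) (inv_ne_zero (ne_of_gt hvst)) heq
    rwa [inv_inv] at this
  exact ⟨s, hs0, hsderiv, hsIoc⟩
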